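/- arXiv:math/0204038 — 3 statements merged into one kernel-verified Lean document; each statement's English description precedes it below -/
import Mathlib

section
/- Let $X_1$ and $X_2$ be linear spaces, $A: X_1 \to X_2$ a linear bijection, $P_1: X_1 \to X_1$ and $P_2: X_2 \to X_2$ linear projections (idempotents), and set $Q_1 = I - P_1$, $Q_2 = I - P_2$. Then the restricted operator $P_2 A P_1 : \operatorname{im} P_1 \to \operatorname{im} P_2$ is bijective if and only if $Q_1 A^{-1} Q_2 : \operatorname{im} Q_2 \to \operatorname{im} Q_1$ is bijective. Moreover, in this case $(P_2 A P_1)^{-1} = P_1 A^{-1} P_2 - P_1 A^{-1} Q_2 (Q_1 A^{-1} Q_2)^{-1} Q_1 A^{-1} P_2$. -/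
theorem my_aux {K : Type*} [Field K] {X1 X2 : Type*}
    [AddCommGroup X1] [Module K X1] [AddCommGroup X2] [Module K X2]
    (A : X1 ≃ₗ[K] X2) (P1 : X1 →ₗ[K] X1) (P2 : X2 →ₗ[K] X2)
    (hP1 : P1 ∘ₗ P1 = P1) (hP2 : P2 ∘ₗ P2 = P2)
    (Q1 : X1 →ₗ[K] X1) (Q2 : X2 →ₗ[K] X2)
    (hQ1 : Q1 = LinearMap.id - P1) (hQ2 : Q2 = LinearMap.id - P2)
    (R : LinearMap.range P1 →ₗ[K] LinearMap.range P2)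
    (hR : R = LinearMap.codRestrict (LinearMap.range P2)
      (P2 ∘ₗ A.toLinearMap ∘ₗ (LinearMap.range P1).subtype)
      (fun x => LinearMap.mem_range_self P2 _))
    (S : LinearMap.range Q2 →ₗ[K] LinearMap.range Q1)
    (hS : S = LinearMap.codRestrict (LinearMap.range Q1)
      (Q1 ∘ₗ A.symm.toLinearMap ∘ₗ (LinearMap.range Q2).subtype)
      (fun x => LinearMap.mem_range_self Q1 _))
    (C : LinearMap.range Q1 →ₗ[K] LinearMap.range Q2)
    (hSC : S ∘ₗ C = LinearMap.id) (hCS : C ∘ₗ S = LinearMap.id) :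
    (∀ y : LinearMap.range P2,
        R ⟨P1 (A.symm (P2 ↑y) -
              A.symm (Q2 ↑(C ⟨Q1 (A.symm (P2 ↑y)), LinearMap.mem_range_self Q1 _⟩))),
            LinearMap.mem_range_self P1 _⟩ = y) ∧
      (∀ x : LinearMap.range P1,
        (⟨P1 (A.symm (P2 ↑(R x)) -
              A.symm (Q2 ↑(C ⟨Q1 (A.symm (P2 ↑(R x))), LinearMap.mem_range_self Q1 _⟩))),
            LinearMap.mem_range_self P1 _⟩ : LinearMap.range P1) = x) := by
  have hp1 : ∀ v, P1 (P1 v) = P1 v := fun v => DFunLike.congr_fun hP1 v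
  have hp2 : ∀ v, P2 (P2 v) = P2 v := fun v => DFunLike.congr_fun hP2 v
  have hq1 : ∀ v, Q1 v = v - P1 v := fun v => by rw [hQ1]; rfl
  have hq2 : ∀ v, Q2 v = v - P2 v := fun v => by rw [hQ2]; rfl
  have fixP1 : ∀ v, v ∈ LinearMap.range P1 → P1 v = v := by
    rintro v ⟨w, rfl⟩; exact hp1 w
  have fixP2 : ∀ v, v ∈ LinearMap.range P2 → P2 v = v := by
    rintro v ⟨w, rfl⟩; exact hp2 w
  have zeroP2Q : ∀ v, v ∈ LinearMap.range Q2 → P2 v = 0 := by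
    rintro v ⟨w, rfl⟩; rw [hq2, map_sub, hp2, sub_self]
  have zeroQ1P : ∀ v, v ∈ LinearMap.range P1 → Q1 v = 0 := by
    intro v hv; rw [hq1, fixP1 v hv, sub_self]
  have fixQ2 : ∀ v, v ∈ LinearMap.range Q2 → Q2 v = v := by
    intro v hv; rw [hq2, zeroP2Q v hv, sub_zero]
  have hsc : ∀ w : LinearMap.range Q1, Q1 (A.symm ↑(C w)) = ↑w := by
    intro w
    have h := DFunLike.congr_fun hSC w
    rw [hS] at h
    simpa using congrArg Subtype.val h
  have hcs : ∀ z : LinearMap.range Q2,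
      C ⟨Q1 (A.symm ↑z), LinearMap.mem_range_self Q1 _⟩ = z := by
    intro z
    have h := DFunLike.congr_fun hCS z
    rw [hS] at h
    exact h
  constructor
  · intro y
    have hy : P2 (↑y : X2) = ↑y := fixP2 _ y.2
    apply Subtype.ext
    rw [hR]
    simp only [LinearMap.codRestrict_apply, LinearMap.comp_apply, Submodule.coe_subtype,
      LinearEquiv.coe_coe]
    rw [hy]
    set c : X2 := (↑(C ⟨Q1 (A.symm (↑y : X2)), LinearMap.mem_range_self Q1 _⟩) : X2) with hc
    have hmemc : c ∈ LinearMap.range Q2 := (C _).2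
    have hQ2c : Q2 c = c := fixQ2 _ hmemc
    have hP2c : P2 c = 0 := zeroP2Q _ hmemc
    have key : Q1 (A.symm c) = Q1 (A.symm (↑y : X2)) :=
      hsc ⟨Q1 (A.symm ↑y), LinearMap.mem_range_self Q1 _⟩
    rw [hQ2c]
    have hfix : P1 (A.symm (↑y : X2) - A.symm c) = A.symm (↑y : X2) - A.symm c := by
      have h0 : Q1 (A.symm (↑y : X2) - A.symm c) = 0 := by
        rw [map_sub, key, sub_self]
      have h1 : A.symm (↑y : X2) - A.symm c - P1 (A.symm (↑y : X2) - A.symm c) = 0 :=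
        (hq1 _).symm.trans h0
      exact (sub_eq_zero.mp h1).symm
    rw [hfix, map_sub, A.apply_symm_apply, A.apply_symm_apply, map_sub, hy, hP2c, sub_zero]
  · intro x
    have hx : P1 (↑x : X1) = ↑x := fixP1 _ x.2
    have hRx : (↑(R x) : X2) = P2 (A ↑x) := by
      rw [hR]; simp
    apply Subtype.ext
    show P1 _ = (↑x : X1)
    rw [hRx, hp2]
    set z : X2 := Q2 (A ↑x) with hz
    have hzmem : z ∈ LinearMap.range Q2 := LinearMap.mem_range_self Q2 _
    have hAx : P2 (A (↑x : X1)) = A ↑x - z := by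
      rw [hz, hq2]; abel
    have harg : (⟨Q1 (A.symm (P2 (A (↑x : X1)))), LinearMap.mem_range_self Q1 _⟩ :
        LinearMap.range Q1) = -⟨Q1 (A.symm z), LinearMap.mem_range_self Q1 _⟩ := by
      apply Subtype.ext
      show Q1 (A.symm (P2 (A (↑x : X1)))) = -(Q1 (A.symm z))
      rw [hAx, map_sub, A.symm_apply_apply, map_sub, zeroQ1P _ x.2, zero_sub]
    have hc : (↑(C ⟨Q1 (A.symm (P2 (A (↑x : X1)))), LinearMap.mem_range_self Q1 _⟩) : X2)
        = -z := by
      rw [harg, map_neg, hcs ⟨z, hzmem⟩]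
      rfl
    rw [hc]
    have hQ2negz : Q2 (-z) = -z := by rw [map_neg, fixQ2 _ hzmem]
    rw [hQ2negz, hAx]
    have hfin : A.symm (A (↑x : X1) - z) - A.symm (-z) = ↑x := by
      rw [map_sub, map_neg, A.symm_apply_apply, sub_neg_eq_add, sub_add_cancel]
    rw [hfin, hx]

theorem my_bij {K : Type*} [Field K] {X1 X2 : Type*}
    [AddCommGroup X1] [Module K X1] [AddCommGroup X2] [Module K X2]
    (A : X1 ≃ₗ[K] X2) (P1 : X1 →ₗ[K] X1) (P2 : X2 →ₗ[K] X2)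
    (hP1 : P1 ∘ₗ P1 = P1) (hP2 : P2 ∘ₗ P2 = P2)
    (Q1 : X1 →ₗ[K] X1) (Q2 : X2 →ₗ[K] X2)
    (hQ1 : Q1 = LinearMap.id - P1) (hQ2 : Q2 = LinearMap.id - P2)
    (R : LinearMap.range P1 →ₗ[K] LinearMap.range P2)
    (hR : R = LinearMap.codRestrict (LinearMap.range P2)
      (P2 ∘ₗ A.toLinearMap ∘ₗ (LinearMap.range P1).subtype)
      (fun x => LinearMap.mem_range_self P2 _))
    (S : LinearMap.range Q2 →ₗ[K] LinearMap.range Q1)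
    (hS : S = LinearMap.codRestrict (LinearMap.range Q1)
      (Q1 ∘ₗ A.symm.toLinearMap ∘ₗ (LinearMap.range Q2).subtype)
      (fun x => LinearMap.mem_range_self Q1 _))
    (h : ∃ C : LinearMap.range Q1 →ₗ[K] LinearMap.range Q2,
      S ∘ₗ C = LinearMap.id ∧ C ∘ₗ S = LinearMap.id) :
    Function.Bijective R := by
  obtain ⟨C, h1, h2⟩ := h
  obtain ⟨hl, hr⟩ := my_aux A P1 P2 hP1 hP2 Q1 Q2 hQ1 hQ2 R hR S hS C h1 h2
  constructor
  · intro a b hab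
    have ha := hr a
    rw [hab] at ha
    exact ha.symm.trans (hr b)
  · intro y
    exact ⟨_, hl y⟩

theorem exC {K : Type*} [Field K] {Y1 Y2 : Type*}
    [AddCommGroup Y1] [Module K Y1] [AddCommGroup Y2] [Module K Y2]
    (S : Y1 →ₗ[K] Y2) (h : Function.Bijective S) :
    ∃ C : Y2 →ₗ[K] Y1, S ∘ₗ C = LinearMap.id ∧ C ∘ₗ S = LinearMap.id := by
  let E := LinearEquiv.ofBijective S h
  refine ⟨E.symm.toLinearMap, LinearMap.ext fun w => ?_, LinearMap.ext fun z => ?_⟩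
  · exact E.apply_symm_apply w
  · exact E.symm_apply_apply z

/-- Lemma 2.3: for a linear bijection `A : X₁ → X₂` and idempotents `P₁, P₂` with complements
`Q₁, Q₂`, the operator `P₂AP₁ : im P₁ → im P₂` is bijective iff `Q₁A⁻¹Q₂ : im Q₂ → im Q₁` is,
and in that case `(P₂AP₁)⁻¹ = P₁A⁻¹P₂ - P₁A⁻¹Q₂ (Q₁A⁻¹Q₂)⁻¹ Q₁A⁻¹P₂`. -/
theorem stmt_0 {K : Type*} [Field K] {X1 X2 : Type*}
    [AddCommGroup X1] [Module K X1] [AddCommGroup X2] [Module K X2]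
    (A : X1 ≃ₗ[K] X2) (P1 : X1 →ₗ[K] X1) (P2 : X2 →ₗ[K] X2)
    (hP1 : P1 ∘ₗ P1 = P1) (hP2 : P2 ∘ₗ P2 = P2)
    (Q1 : X1 →ₗ[K] X1) (Q2 : X2 →ₗ[K] X2)
    (hQ1 : Q1 = LinearMap.id - P1) (hQ2 : Q2 = LinearMap.id - P2)
    -- `R = P₂AP₁ : im P₁ → im P₂`
    (R : LinearMap.range P1 →ₗ[K] LinearMap.range P2)
    (hR : R = LinearMap.codRestrict (LinearMap.range P2)
      (P2 ∘ₗ A.toLinearMap ∘ₗ (LinearMap.range P1).subtype)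
      (fun x => LinearMap.mem_range_self P2 _))
    -- `S = Q₁A⁻¹Q₂ : im Q₂ → im Q₁`
    (S : LinearMap.range Q2 →ₗ[K] LinearMap.range Q1)
    (hS : S = LinearMap.codRestrict (LinearMap.range Q1)
      (Q1 ∘ₗ A.symm.toLinearMap ∘ₗ (LinearMap.range Q2).subtype)
      (fun x => LinearMap.mem_range_self Q1 _)) :
    (Function.Bijective R ↔ Function.Bijective S) ∧
    -- the inverse formula: for any two-sided inverse `C` of `S = Q₁A⁻¹Q₂`, the map
    -- `y ↦ P₁ (A⁻¹ (P₂ y) - A⁻¹ (Q₂ (C (Q₁ (A⁻¹ (P₂ y))))))` is a two-sided inverse of `R`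
    (∀ C : LinearMap.range Q1 →ₗ[K] LinearMap.range Q2,
      S ∘ₗ C = LinearMap.id → C ∘ₗ S = LinearMap.id →
      (∀ y : LinearMap.range P2,
        R ⟨P1 (A.symm (P2 ↑y) -
              A.symm (Q2 ↑(C ⟨Q1 (A.symm (P2 ↑y)), LinearMap.mem_range_self Q1 _⟩))),
            LinearMap.mem_range_self P1 _⟩ = y) ∧
      (∀ x : LinearMap.range P1,
        (⟨P1 (A.symm (P2 ↑(R x)) -
              A.symm (Q2 ↑(C ⟨Q1 (A.symm (P2 ↑(R x))), LinearMap.mem_range_self Q1 _⟩))),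
            LinearMap.mem_range_self P1 _⟩ : LinearMap.range P1) = x)) := by
  have hp1 : ∀ v, P1 (P1 v) = P1 v := fun v => DFunLike.congr_fun hP1 v
  have hp2 : ∀ v, P2 (P2 v) = P2 v := fun v => DFunLike.congr_fun hP2 v
  have hQ1idem : Q1 ∘ₗ Q1 = Q1 := by
    ext v
    simp only [hQ1, LinearMap.comp_apply, LinearMap.sub_apply, LinearMap.id_apply, map_sub,
      hp1 v]
    abel
  have hQ2idem : Q2 ∘ₗ Q2 = Q2 := by
    ext v
    simp only [hQ2, LinearMap.comp_apply, LinearMap.sub_apply, LinearMap.id_apply, map_sub,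
      hp2 v]
    abel
  have hP1eq : P1 = LinearMap.id - Q1 := by
    ext v; simp [hQ1]
  have hP2eq : P2 = LinearMap.id - Q2 := by
    ext v; simp [hQ2]
  have hR' : R = LinearMap.codRestrict (LinearMap.range P2)
      (P2 ∘ₗ A.symm.symm.toLinearMap ∘ₗ (LinearMap.range P1).subtype)
      (fun x => LinearMap.mem_range_self P2 _) := by
    rw [LinearEquiv.symm_symm]; exact hR
  constructor
  · constructor
    · intro hRbij
      exact my_bij A.symm Q2 Q1 hQ2idem hQ1idem P2 P1 hP2eq hP1eq S hS R hR' (exC R hRbij)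
    · intro hSbij
      exact my_bij A P1 P2 hP1 hP2 Q1 Q2 hQ1 hQ2 R hR S hS (exC S hSbij)
  · intro C h1 h2
    exact my_aux A P1 P2 hP1 hP2 Q1 Q2 hQ1 hQ2 R hR S hS C h1 h2
end

section
/- Let $M(\phi) = T(\phi) + H(\phi)$ on $H^2(\mathbb{T})$. For all $\phi, \psi \in L^\infty(\mathbb{T})$ one has $M(\phi\psi) = M(\phi)M(\psi) + H(\phi)M(\tilde\psi - \psi)$ where $\tilde\psi(t)=\psi(t^{-1})$. In particular, $M(\phi\psi) = M(\phi)M(\psi)$ whenever $\psi$ is even, i.e. $\tilde\psi = \psi$. -/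
open MeasureTheory Complex Real
noncomputable section
namespace TH

abbrev Tp : ℝ := 2 * Real.pi
instance : Fact (0 < Tp) := ⟨by positivity⟩
abbrev 𝕋 := AddCircle Tp
abbrev μ : Measure 𝕋 := AddCircle.haarAddCircle
abbrev L2 := Lp ℂ 2 μ

open scoped Classical in
/-- Multiplication operator by `φ` (defined to be `0` if `φ` is not essentially bounded). -/
def Lmul (φ : 𝕋 → ℂ) : L2 →L[ℂ] L2 :=
  if hφ : MemLp φ ⊤ μ then
    LinearMap.mkContinuous
      { toFun := fun f => ((Lp.memLp f).smul (r := 2) hφ).toLp (φ • ⇑f)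
        map_add' := fun f g => by
          rw [← MemLp.toLp_add]
          exact MemLp.toLp_congr _ _ (by
            filter_upwards [Lp.coeFn_add f g] with x hx
            simp only [Pi.smul_apply, smul_eq_mul, Pi.mul_apply, hx, Pi.add_apply, mul_add])
        map_smul' := fun c f => by
          rw [RingHom.id_apply, ← MemLp.toLp_const_smul]
          exact MemLp.toLp_congr ((Lp.memLp (c • f)).smul (r := 2) hφ)
            (((Lp.memLp f).smul (r := 2) hφ).const_smul c) (by
            filter_upwards [Lp.coeFn_smul c f] with x hx
            simp only [Pi.smul_apply, smul_eq_mul, Pi.mul_apply, hx]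
            ring) }
      (eLpNorm φ ⊤ μ).toReal
      (fun f => by
        simp only [LinearMap.coe_mk, AddHom.coe_mk]
        rw [Lp.norm_toLp, Lp.norm_def, ← ENNReal.toReal_mul]
        refine ENNReal.toReal_mono ?_ ?_
        · exact ENNReal.mul_ne_top hφ.eLpNorm_ne_top (Lp.eLpNorm_ne_top f)
        · exact eLpNorm_smul_le_eLpNorm_top_mul_eLpNorm 2 (Lp.aestronglyMeasurable f) φ)
  else 0

/-- Composition with `x ↦ -x` on `L²`. -/
def Cneg : L2 → L2 :=
  Lp.compMeasurePreserving (fun x : 𝕋 => -x) (Measure.measurePreserving_neg μ)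

/-- The flip operator `J : f(t) ↦ t⁻¹ f(t⁻¹)`. -/
def Jop : L2 →L[ℂ] L2 :=
  { toFun := fun f => Lmul (fun x => fourier (-1) x) (Cneg f)
    map_add' := fun f g => by
      show Lmul _ (Cneg (f + g)) = Lmul _ (Cneg f) + Lmul _ (Cneg g)
      unfold Cneg
      rw [map_add, map_add]
    map_smul' := fun c f => by
      show Lmul _ (Cneg (c • f)) = c • Lmul _ (Cneg f)
      rw [← map_smul (Lmul fun x => fourier (-1) x)]
      congr 1
      apply Lp.ext
      unfold Cneg
      filter_upwards [Lp.coeFn_compMeasurePreserving (c • f) (Measure.measurePreserving_neg μ),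
        Lp.coeFn_smul c (Lp.compMeasurePreserving (fun x : 𝕋 => -x)
          (Measure.measurePreserving_neg μ) f),
        (Measure.measurePreserving_neg μ).quasiMeasurePreserving.ae_eq_comp (Lp.coeFn_smul c f),
        Lp.coeFn_compMeasurePreserving f (Measure.measurePreserving_neg μ)]
        with x hx1 hx2 hx3 hx4
      refine hx1.trans (hx3.trans ?_)
      have h5 : ((c • (↑↑f : 𝕋 → ℂ)) ∘ Neg.neg) x = c • (↑↑f ∘ Neg.neg) x := rfl
      rw [h5, ← hx4]
      exact hx2.symm
    cont := by
      exact (Lmul _).continuous.comp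
        (Lp.isometry_compMeasurePreserving (E := ℂ) (p := 2)
          (Measure.measurePreserving_neg μ)).continuous }

/-- The Hardy space `H²(𝕋)`: closed span of `{t^n : n ≥ 0}`. -/
def Hardy : Submodule ℂ L2 :=
  (Submodule.span ℂ (Set.range fun n : ℕ => (fourierLp 2 (n : ℤ) : L2))).topologicalClosure

instance : CompleteSpace Hardy :=
  IsClosed.completeSpace_coe (hs := Submodule.isClosed_topologicalClosure _)

/-- The Riesz projection, as an operator on `L²(𝕋)`. -/
def Pproj : L2 →L[ℂ] L2 := Hardy.subtypeL ∘L Submodule.orthogonalProjectionOnto Hardy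

/-- The Toeplitz operator `T(φ) : f ↦ P(φ f)` on `H²`. -/
def Top (φ : 𝕋 → ℂ) : Hardy →L[ℂ] Hardy :=
  Submodule.orthogonalProjectionOnto Hardy ∘L Lmul φ ∘L Hardy.subtypeL

/-- The Hankel operator `H(φ) : f ↦ P(φ · Jf)` on `H²`. -/
def Hop (φ : 𝕋 → ℂ) : Hardy →L[ℂ] Hardy :=
  Submodule.orthogonalProjectionOnto Hardy ∘L Lmul φ ∘L Jop ∘L Hardy.subtypeL

/-- The Toeplitz + Hankel operator `M(φ) = T(φ) + H(φ)`. -/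
def Mop (φ : 𝕋 → ℂ) : Hardy →L[ℂ] Hardy := Top φ + Hop φ

/-- The flip `φ̃(t) = φ(t⁻¹)` of a function on the circle. -/
def flip (φ : 𝕋 → ℂ) : 𝕋 → ℂ := fun x => φ (-x)


open scoped ComplexInnerProductSpace ComplexConjugate

lemma Lmul_apply {φ : 𝕋 → ℂ} (hφ : MemLp φ ⊤ μ) (f : L2) :
    ⇑(Lmul φ f) =ᵐ[μ] φ • ⇑f := by
  simp only [Lmul, dif_pos hφ, LinearMap.mkContinuous_apply, LinearMap.coe_mk, AddHom.coe_mk]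
  exact MemLp.coeFn_toLp _

lemma fourier_memLp (n : ℤ) : MemLp (fun x : 𝕋 => fourier n x) ⊤ μ := by
  refine memLp_top_of_bound (fourier n).continuous.aestronglyMeasurable 1 ?_
  filter_upwards with x
  rw [fourier_apply]
  exact le_of_eq (Circle.norm_coe _)

lemma Jop_apply (f : L2) :
    ⇑(Jop f) =ᵐ[μ] fun x => fourier (-1) x * f (-x) := by
  show ⇑(Lmul (fun x => fourier (-1) x) (Cneg f)) =ᵐ[μ] _
  filter_upwards [Lmul_apply (fourier_memLp (-1)) (Cneg f),
    Lp.coeFn_compMeasurePreserving f (Measure.measurePreserving_neg μ)] with x h1 h2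
  have h1' : (Lmul (fun x => fourier (-1) x) (Cneg f)) x = fourier (-1) x * (Cneg f) x := h1
  have h2' : (Cneg f) x = f (-x) := h2
  rw [h1', h2']

lemma fourier_neg_arg (n : ℤ) (x : 𝕋) : fourier n (-x) = fourier (-n) x := by
  rw [fourier_apply, fourier_apply, smul_neg, ← neg_smul]

lemma Jop_fourierLp (n : ℤ) : Jop (fourierLp 2 n : L2) = (fourierLp 2 (-1 - n) : L2) := by
  apply Lp.ext
  filter_upwards [Jop_apply (fourierLp 2 n), coeFn_fourierLp 2 (-1 - n),
    (Measure.measurePreserving_neg μ).quasiMeasurePreserving.ae_eq_comp (coeFn_fourierLp 2 n)]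
    with x h1 h2 h3
  rw [h1, h2]
  have h3' : (fourierLp 2 n : L2) (-x) = fourier n (-x) := h3
  rw [h3', fourier_neg_arg, ← fourier_add, show (-1 + -n : ℤ) = -1 - n by ring]

lemma Jop_Jop (f : L2) : Jop (Jop f) = f := by
  apply Lp.ext
  filter_upwards [Jop_apply (Jop f),
    (Measure.measurePreserving_neg μ).quasiMeasurePreserving.ae_eq_comp (Jop_apply f)]
    with x h1 h2
  rw [h1]
  have h2' : (Jop f) (-x) = fourier (-1) (-x) * f (- -x) := h2
  rw [h2', neg_neg, fourier_neg_arg, ← mul_assoc, ← fourier_add]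
  norm_num [fourier_zero]

lemma fourierLp_mem_Hardy (n : ℕ) : (fourierLp 2 (n : ℤ) : L2) ∈ Hardy :=
  Submodule.le_topologicalClosure _ (Submodule.subset_span ⟨n, rfl⟩)

lemma fourierLp_mem_orth (k : ℤ) (hk : k < 0) : (fourierLp 2 k : L2) ∈ Hardyᗮ := by
  rw [Submodule.mem_orthogonal]
  have hle : Hardy ≤ LinearMap.ker ((innerSL ℂ (fourierLp 2 k : L2)) : L2 →ₗ[ℂ] ℂ) := by
    apply Submodule.topologicalClosure_minimal
    · rw [Submodule.span_le]
      rintro _ ⟨n, rfl⟩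
      simp only [SetLike.mem_coe, LinearMap.mem_ker, ContinuousLinearMap.coe_coe, innerSL_apply_apply]
      have := orthonormal_iff_ite.mp (orthonormal_fourier (T := Tp)) k (n : ℤ)
      rw [this, if_neg (by omega)]
    · exact ContinuousLinearMap.isClosed_ker _
  intro u hu
  have hker := hle hu
  rw [LinearMap.mem_ker] at hker
  simp only [ContinuousLinearMap.coe_coe, innerSL_apply_apply] at hker
  rw [← inner_conj_symm, hker, map_zero]

lemma Jop_mem_orth {f : L2} (hf : f ∈ Hardy) : Jop f ∈ Hardyᗮ := by
  have hle : Hardy ≤ Submodule.comap (Jop : L2 →ₗ[ℂ] L2) Hardyᗮ := by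
    apply Submodule.topologicalClosure_minimal
    · rw [Submodule.span_le]
      rintro _ ⟨n, rfl⟩
      simp only [SetLike.mem_coe, Submodule.mem_comap, ContinuousLinearMap.coe_coe]
      rw [Jop_fourierLp]
      exact fourierLp_mem_orth _ (by omega)
    · exact (Submodule.isClosed_orthogonal _).preimage Jop.continuous
  exact hle hf

lemma Jop_inner (f g : L2) : ⟪Jop f, g⟫ = ⟪f, Jop g⟫ := by
  rw [MeasureTheory.L2.inner_def, MeasureTheory.L2.inner_def]
  have h1 : ∫ x, ⟪f x, (Jop g) x⟫ ∂μ
      = ∫ x, conj (f x) * (fourier (-1) x * g (-x)) ∂μ := by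
    refine integral_congr_ae ?_
    filter_upwards [Jop_apply g] with x hx
    rw [RCLike.inner_apply, hx]
    ring
  have h2 : ∫ x, ⟪(Jop f) x, g x⟫ ∂μ
      = ∫ x, conj (fourier (-1) x * f (-x)) * g x ∂μ := by
    refine integral_congr_ae ?_
    filter_upwards [Jop_apply f] with x hx
    rw [RCLike.inner_apply, hx]
    ring
  rw [h1, h2, ← integral_neg_eq_self (fun x => conj (f x) * (fourier (-1) x * g (-x))) μ]
  refine integral_congr_ae (Filter.Eventually.of_forall fun x => ?_)
  simp only [neg_neg]
  have hfour : fourier (-1) (-x) = conj (fourier (-1) x) := by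
    rw [fourier_neg_arg]; exact fourier_neg
  rw [hfour, map_mul, mul_assoc, mul_left_comm]

lemma inner_fourier_zero_imp {w : L2} (h : ∀ k : ℤ, ⟪(fourierLp 2 k : L2), w⟫ = 0) :
    w = 0 := by
  have h2 : w ∈ (Submodule.span ℂ (Set.range (@fourierLp Tp _ 2 _)))ᗮ := by
    rw [Submodule.mem_orthogonal]
    have hle : Submodule.span ℂ (Set.range (@fourierLp Tp _ 2 _))
        ≤ LinearMap.ker ((innerSL ℂ w) : L2 →ₗ[ℂ] ℂ) := by
      rw [Submodule.span_le]
      rintro _ ⟨k, rfl⟩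
      simp only [SetLike.mem_coe, LinearMap.mem_ker, ContinuousLinearMap.coe_coe, innerSL_apply_apply]
      rw [← inner_conj_symm, h k, map_zero]
    intro u hu
    have hker := hle hu
    rw [LinearMap.mem_ker] at hker
    simp only [ContinuousLinearMap.coe_coe, innerSL_apply_apply] at hker
    rw [← inner_conj_symm, hker, map_zero]
  rw [Submodule.topologicalClosure_eq_top_iff.mp
    (span_fourierLp_closure_eq_top (p := 2) (by norm_num))] at h2
  simpa using h2

lemma Pdecomp (h : L2) :
    h = (Submodule.orthogonalProjectionOnto Hardy h : L2)
      + Jop (Submodule.orthogonalProjectionOnto Hardy (Jop h) : L2) := by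
  set u : L2 := (Submodule.orthogonalProjectionOnto Hardy h : L2) with hu
  set v : L2 := Jop (Submodule.orthogonalProjectionOnto Hardy (Jop h) : L2) with hv
  have horth : h - u - v ∈ Hardyᗮ := by
    have h1 : h - u ∈ Hardyᗮ := Submodule.sub_starProjection_mem_orthogonal h
    have h2 : v ∈ Hardyᗮ := Jop_mem_orth (Submodule.orthogonalProjectionOnto Hardy (Jop h)).2
    exact Submodule.sub_mem _ h1 h2
  have hJorth : Jop (h - u - v) ∈ Hardyᗮ := by
    have heq : Jop (h - u - v)
        = (Jop h - (Submodule.orthogonalProjectionOnto Hardy (Jop h) : L2)) - Jop u := by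
      rw [map_sub, map_sub, hv, Jop_Jop]
      exact sub_right_comm _ _ _
    rw [heq]
    refine Submodule.sub_mem _ (Submodule.sub_starProjection_mem_orthogonal _) ?_
    exact Jop_mem_orth (Submodule.orthogonalProjectionOnto Hardy h).2
  have hw : h - u - v = 0 := by
    apply inner_fourier_zero_imp
    intro k
    rcases le_or_gt 0 k with hk | hk
    · obtain ⟨n, rfl⟩ : ∃ n : ℕ, (n : ℤ) = k := ⟨k.toNat, Int.toNat_of_nonneg hk⟩
      exact (Submodule.mem_orthogonal Hardy _).mp horth _ (fourierLp_mem_Hardy n)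
    · have hkey : (fourierLp 2 k : L2) = Jop (fourierLp 2 (-1 - k) : L2) := by
        rw [Jop_fourierLp, show (-1 - (-1 - k) : ℤ) = k by ring]
      rw [hkey, Jop_inner]
      obtain ⟨n, hn⟩ : ∃ n : ℕ, (n : ℤ) = -1 - k := ⟨(-1 - k).toNat, Int.toNat_of_nonneg (by omega)⟩
      rw [← hn]
      exact (Submodule.mem_orthogonal Hardy _).mp hJorth _ (fourierLp_mem_Hardy n)
  have hfin : h - (u + v) = 0 := by rw [← sub_sub]; exact hw
  rw [sub_eq_zero] at hfin
  exact hfin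

lemma Lmul_mul {φ ψ : 𝕋 → ℂ} (hφ : MemLp φ ⊤ μ) (hψ : MemLp ψ ⊤ μ) (f : L2) :
    Lmul (φ * ψ) f = Lmul φ (Lmul ψ f) := by
  have hφψ : MemLp (φ * ψ) ⊤ μ := by
    have h := hψ.smul (r := ⊤) hφ
    have heq : φ • ψ = φ * ψ := rfl
    rwa [heq] at h
  apply Lp.ext
  filter_upwards [Lmul_apply hφψ f, Lmul_apply hφ (Lmul ψ f), Lmul_apply hψ f] with x h1 h2 h3
  rw [h1, h2]
  simp only [Pi.smul_apply, smul_eq_mul, Pi.mul_apply, h3]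
  ring

lemma Lmul_symbol_sub {φ ψ : 𝕋 → ℂ} (hφ : MemLp φ ⊤ μ) (hψ : MemLp ψ ⊤ μ) (f : L2) :
    Lmul (φ - ψ) f = Lmul φ f - Lmul ψ f := by
  apply Lp.ext
  filter_upwards [Lmul_apply (hφ.sub hψ) f, Lmul_apply hφ f, Lmul_apply hψ f,
    Lp.coeFn_sub (Lmul φ f) (Lmul ψ f)] with x h1 h2 h3 h4
  rw [h1, h4]
  simp only [Pi.smul_apply, smul_eq_mul, Pi.sub_apply, Pi.mul_apply, h2, h3]
  ring

lemma flip_memLp {ψ : 𝕋 → ℂ} (hψ : MemLp ψ ⊤ μ) : MemLp (flip ψ) ⊤ μ :=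
  hψ.comp_measurePreserving (Measure.measurePreserving_neg μ)

lemma Jop_Lmul {ψ : 𝕋 → ℂ} (hψ : MemLp ψ ⊤ μ) (f : L2) :
    Jop (Lmul ψ f) = Lmul (flip ψ) (Jop f) := by
  apply Lp.ext
  filter_upwards [Jop_apply (Lmul ψ f), Lmul_apply (flip_memLp hψ) (Jop f), Jop_apply f,
    (Measure.measurePreserving_neg μ).quasiMeasurePreserving.ae_eq_comp (Lmul_apply hψ f)]
    with x h1 h2 h3 h4
  have h2' : (Lmul (flip ψ) (Jop f)) x = flip ψ x * (Jop f) x := h2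
  have h4' : (Lmul ψ f) (-x) = ψ (-x) * f (-x) := h4
  rw [h1, h2', h4', h3]
  simp only [flip]
  ring

lemma Mop_apply (χ : 𝕋 → ℂ) (f : Hardy) :
    Mop χ f = Submodule.orthogonalProjectionOnto Hardy (Lmul χ ((f : L2) + Jop (f : L2))) := by
  simp only [Mop, ContinuousLinearMap.add_apply, Top, Hop, ContinuousLinearMap.comp_apply,
    Submodule.subtypeL_apply, map_add]

/-- `M(φψ) = M(φ)M(ψ) + H(φ)M(ψ~ - ψ)`, and `M(φψ) = M(φ)M(ψ)` when `ψ` is even. -/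
theorem stmt_3 (φ ψ : 𝕋 → ℂ) (hφ : MemLp φ ⊤ μ) (hψ : MemLp ψ ⊤ μ) :
    Mop (φ * ψ) = (Mop φ).comp (Mop ψ) + (Hop φ).comp (Mop (flip ψ - ψ)) ∧
    (flip ψ =ᵐ[μ] ψ → Mop (φ * ψ) = (Mop φ).comp (Mop ψ)) := by
  have hψf : MemLp (flip ψ) ⊤ μ := flip_memLp hψ
  have main : Mop (φ * ψ) = (Mop φ).comp (Mop ψ) + (Hop φ).comp (Mop (flip ψ - ψ)) := by
    refine ContinuousLinearMap.ext fun f => ?_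
    set g : L2 := (f : L2) + Jop (f : L2) with hg
    have hJg : Jop g = g := by rw [hg, map_add, Jop_Jop, add_comm]
    have key : Lmul ψ g = ((Mop ψ f : Hardy) : L2) + Jop ((Mop (flip ψ) f : Hardy) : L2) := by
      rw [Mop_apply, Mop_apply, ← hg]
      nth_rewrite 1 [Pdecomp (Lmul ψ g)]
      rw [Jop_Lmul hψ, hJg]
    have hsub : Mop (flip ψ - ψ) f = Mop (flip ψ) f - Mop ψ f := by
      rw [Mop_apply, Mop_apply, Mop_apply, Lmul_symbol_sub hψf hψ, map_sub]
    have hHop : ∀ x : Hardy, Hop φ x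
        = Submodule.orthogonalProjectionOnto Hardy (Lmul φ (Jop (x : L2))) := fun x => rfl
    rw [ContinuousLinearMap.add_apply, ContinuousLinearMap.comp_apply,
      ContinuousLinearMap.comp_apply, Mop_apply (φ * ψ) f, ← hg, Lmul_mul hφ hψ, key,
      Mop_apply φ (Mop ψ f), hHop, hsub]
    simp only [map_add, AddSubgroupClass.coe_sub, map_sub]
    abel
  refine ⟨main, fun heven => ?_⟩
  have hz : Lmul (flip ψ - ψ) = 0 := by
    refine ContinuousLinearMap.ext fun v => ?_
    rw [ContinuousLinearMap.zero_apply]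
    apply Lp.ext
    filter_upwards [Lmul_apply (hψf.sub hψ) v, heven, Lp.coeFn_zero ℂ 2 μ] with x h1 h2 h3
    rw [h1, h3]
    simp only [Pi.smul_apply, smul_eq_mul, Pi.sub_apply, Pi.mul_apply, Pi.zero_apply, h2]
    ring
  have hM0 : Mop (flip ψ - ψ) = 0 := by
    refine ContinuousLinearMap.ext fun f => ?_
    rw [Mop_apply, hz]
    simp
  rw [main, hM0]
  simp

end TH
end
end

section
/- Let $\phi \in GL^\infty(\mathbb{T})$ admit a weak asymmetric factorization $\phi = \phi_- t^{\kappa}\phi_0$ in $L^p$ (with $\phi_0$ even). Then $F := \phi\,\tilde\phi^{-1}$, where $\tilde\phi(t)=\phi(t^{-1})$, admits the weak antisymmetric factorization $F = \phi_-\, t^{2\kappa}\, \tilde\phi_-^{-1}$ with the same factor $\phi_-$ and index $\kappa$. -/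
open MeasureTheory Complex Real
open scoped ENNReal
noncomputable section
namespace TH

/-- Invertibility in `L^∞(𝕋)`. -/
def GLinf (φ : 𝕋 → ℂ) : Prop :=
  MemLp φ ⊤ μ ∧ MemLp (fun x => (φ x)⁻¹) ⊤ μ ∧ ∀ᵐ x ∂μ, φ x ≠ 0

/-- The function `t ↦ 1 + t⁻¹` on the circle. -/
def onePlusTInv (x : 𝕋) : ℂ := 1 + fourier (-1) x
/-- The function `t ↦ 1 - t⁻¹` on the circle. -/
def oneMinusTInv (x : 𝕋) : ℂ := 1 - fourier (-1) x
/-- The function `t ↦ |1 - t|` on the circle. -/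
def absOneMinusT (x : 𝕋) : ℂ := ((‖1 - fourier 1 x‖ : ℝ) : ℂ)
/-- The function `t ↦ |1 + t|` on the circle. -/
def absOnePlusT (x : 𝕋) : ℂ := ((‖1 + fourier 1 x‖ : ℝ) : ℂ)
/-- Evenness (a.e.): `f(t⁻¹) = f(t)`. -/
def evenAE (f : 𝕋 → ℂ) : Prop := ∀ᵐ x ∂μ, f (-x) = f x

/-- `φ = φ₋ tᵏ φ₀` is a weak asymmetric factorization in `L^p(𝕋)`:
`(1+t⁻¹)φ₋ ∈ H^p-bar`, `(1-t⁻¹)φ₋⁻¹ ∈ H^q-bar`, `|1-t|φ₀ ∈ L^q` even,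
`|1+t|φ₀⁻¹ ∈ L^p` even. -/
def WeakAsymFactor (p q : ℝ≥0∞) (φ φm φ0 : 𝕋 → ℂ) (κ : ℤ) : Prop :=
  (∀ᵐ x ∂μ, φ x = φm x * fourier κ x * φ0 x) ∧
  MemLp (fun x => onePlusTInv x * φm x) p μ ∧
  (∀ n : ℤ, 0 < n → fourierCoeff (fun x => onePlusTInv x * φm x) n = 0) ∧
  MemLp (fun x => oneMinusTInv x * (φm x)⁻¹) q μ ∧
  (∀ n : ℤ, 0 < n → fourierCoeff (fun x => oneMinusTInv x * (φm x)⁻¹) n = 0) ∧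
  MemLp (fun x => absOneMinusT x * φ0 x) q μ ∧
  MemLp (fun x => absOnePlusT x * (φ0 x)⁻¹) p μ ∧
  evenAE φ0

/-- `F = φ₋ t^{2κ} (φ₋~)⁻¹` is a weak antisymmetric factorization in `L^p(𝕋)`:
`(1+t⁻¹)φ₋ ∈ H^p-bar` and `(1-t⁻¹)φ₋⁻¹ ∈ H^q-bar`. -/
def WeakAntisymFactor (p q : ℝ≥0∞) (F φm : 𝕋 → ℂ) (κ : ℤ) : Prop :=
  (∀ᵐ x ∂μ, F x = φm x * fourier (2 * κ) x * (φm (-x))⁻¹) ∧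
  MemLp (fun x => onePlusTInv x * φm x) p μ ∧
  (∀ n : ℤ, 0 < n → fourierCoeff (fun x => onePlusTInv x * φm x) n = 0) ∧
  MemLp (fun x => oneMinusTInv x * (φm x)⁻¹) q μ ∧
  (∀ n : ℤ, 0 < n → fourierCoeff (fun x => oneMinusTInv x * (φm x)⁻¹) n = 0)


set_option maxHeartbeats 1000000 in
/-- A weak asymmetric factorization `φ = φ₋ tᵏ φ₀` yields a weak antisymmetric factorization
`F = φ₋ t^{2κ} (φ₋~)⁻¹` of `F = φ φ~⁻¹`, with the same factor `φ₋` and index `κ`. -/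
theorem stmt_15 (p q : ℝ) (hpq : p.HolderConjugate q)
    (φ φm φ0 : 𝕋 → ℂ) (κ : ℤ) (hφ : GLinf φ)
    (h : WeakAsymFactor (ENNReal.ofReal p) (ENNReal.ofReal q) φ φm φ0 κ) :
    WeakAntisymFactor (ENNReal.ofReal p) (ENNReal.ofReal q)
      (fun x => φ x * (φ (-x))⁻¹) φm κ := by
  obtain ⟨hfac, h2, h3, h4, h5, h6, h7, heven⟩ := h
  refine ⟨?_, h2, h3, h4, h5⟩
  have hneg : MeasureTheory.MeasurePreserving (fun x : 𝕋 => -x) μ μ :=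
    MeasureTheory.Measure.measurePreserving_neg μ
  have hfacneg : ∀ᵐ x ∂μ, φ (-x) = φm (-x) * fourier κ (-x) * φ0 (-x) :=
    hneg.quasiMeasurePreserving.ae
      (p := fun y => φ y = φm y * fourier κ y * φ0 y) hfac
  have hφ0ne : ∀ᵐ x ∂μ, φ0 x ≠ 0 := by
    filter_upwards [hfac, hφ.2.2] with x h1 h2
    intro hz; exact h2 (by rw [h1, hz, mul_zero])
  filter_upwards [hfac, hfacneg, heven, hφ0ne] with x h1 h2 h3 h4
  have hfneg : fourier κ (-x) = (starRingEnd ℂ) (fourier κ x) := by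
    rw [← fourier_neg]
    have : (-κ : ℤ) • x = κ • (-x) := by rw [neg_smul, smul_neg]
    rw [fourier_apply, fourier_apply, this]
  have habs : ‖fourier κ x‖ = 1 := Circle.norm_coe _
  have hconj : ((starRingEnd ℂ) (fourier κ x))⁻¹ = fourier κ x := by
    rw [Complex.inv_def, Complex.normSq_conj, Complex.conj_conj,
      Complex.normSq_eq_norm_sq, habs]
    simp
  have h2κ : fourier (2 * κ) x = fourier κ x * fourier κ x := by
    rw [two_mul, fourier_add]
  rw [h1, h2, h3, hfneg, mul_inv, mul_inv, hconj, h2κ]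
  have hc : φ0 x * (φ0 x)⁻¹ = 1 := mul_inv_cancel₀ h4
  linear_combination ((fourier κ x : ℂ) * (fourier κ x : ℂ) * φm x * (φm (-x))⁻¹) * hc


end TH
end
end
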